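/- Let ε ∈ (0,2). Suppose for all neighboring databases X ~ X' and measurable B, Q_n(B|X) ≤ e^α Q_n(B|X') + η(n), where η(n) = o(n^{-p}) for every p. If an α-relaxed-DP mechanism (in this sense) satisfies sup_θ R(θ,Q_n) ≤ c_0/(αn) for k=2, then for all sufficiently large n, inf_θ R(θ,Q_n) ≥ c_3/(αn) for some constant c_3 > 0. Hence the (α,η)-approximate DP relaxation does not escape the uniform lower bound. -/

import Mathlib

open MeasureTheory

def Grid (n : ℕ) (θ : ℝ) : Prop := ∃ a : ℕ, a ≤ n ∧ θ = (a : ℝ) / n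

/-- **The `(α,η)`-approximate-DP relaxation does not escape the uniform lower bound
(`k = 2`).** Suppose `Q_n(B|X) ≤ e^α Q_n(B|X') + η(n)` for neighboring inputs, with
`η` negligible (tending to `0` faster than any inverse polynomial). If the risk is
uniformly bounded above by `c₀/(αn)`, then for all sufficiently large `n` it is
uniformly bounded below by `c₃/(αn)` for some constant `c₃ > 0`. -/
theorem stmt13 (α c0 : ℝ) (hα : 0 < α) (hα1 : α < 1) (hc0 : 0 < c0)
    (Q : (n : ℕ) → ℝ → Measure ℝ) (hprob : ∀ n θ, IsProbabilityMeasure (Q n θ))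
    (η : ℕ → ℝ) (hη0 : ∀ n, 0 ≤ η n)
    (hneg : ∀ p : ℕ, Filter.Tendsto (fun n : ℕ => η n * (n : ℝ) ^ p)
      Filter.atTop (nhds 0))
    (hDP : ∀ n : ℕ, ∀ θ θ' : ℝ, Grid n θ → Grid n θ' → |θ - θ'| ≤ 1 / (n : ℝ) →
      ∀ B : Set ℝ, MeasurableSet B →
        Q n θ B ≤ ENNReal.ofReal (Real.exp α) * Q n θ' B + ENNReal.ofReal (η n))
    (hub : ∀ n : ℕ, 0 < n → ∀ θ : ℝ, Grid n θ →
      ∫⁻ t, ENNReal.ofReal |t - θ| ∂(Q n θ) ≤ ENNReal.ofReal (c0 / (α * n))) :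
    ∃ c3 : ℝ, 0 < c3 ∧ ∃ N : ℕ, ∀ n : ℕ, N ≤ n → ∀ θ : ℝ, Grid n θ →
      ENNReal.ofReal (c3 / (α * n)) ≤ ∫⁻ t, ENNReal.ofReal |t - θ| ∂(Q n θ) := by
  classical
  set m : ℕ := ⌈4 * c0 / α⌉₊ with hm
  have hm1 : 1 ≤ m := Nat.ceil_pos.mpr (by positivity)
  have hm4 : 4 * c0 / α ≤ (m : ℝ) := Nat.le_ceil _
  have hmR : (0:ℝ) < m := by exact_mod_cast hm1
  set E : ℝ := Real.exp (m * α) with hE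
  have hEpos : 0 < E := Real.exp_pos _
  have hE1 : (1:ℝ) ≤ E := Real.one_le_exp (by positivity)
  refine ⟨α * m / (8 * E), by positivity, ?_⟩
  -- choose N so that η n < 1/(4 m E) for n ≥ N, and N ≥ 2 m
  have htend : Filter.Tendsto η Filter.atTop (nhds 0) := by
    simpa using hneg 0
  have hev : ∀ᶠ n in Filter.atTop, η n < 1 / (4 * m * E) :=
    htend.eventually_lt_const (by positivity)
  obtain ⟨N1, hN1⟩ := Filter.eventually_atTop.mp hev
  refine ⟨max N1 (2 * m), ?_⟩
  intro n hn θ0 hθ0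
  have hnN1 : N1 ≤ n := le_trans (le_max_left _ _) hn
  have hn2m : 2 * m ≤ n := le_trans (le_max_right _ _) hn
  have hn0 : 0 < n := by omega
  have hnR : (0:ℝ) < n := by exact_mod_cast hn0
  haveI : ∀ θ, IsProbabilityMeasure (Q n θ) := fun θ => hprob n θ
  -- single DP step, in real numbers
  have hstep : ∀ θ θ' : ℝ, Grid n θ → Grid n θ' → |θ - θ'| ≤ 1 / (n : ℝ) →
      ∀ B : Set ℝ, MeasurableSet B →
      (Q n θ B).toReal ≤ Real.exp α * (Q n θ' B).toReal + η n := by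
    intro θ θ' hθ hθ' hd B hB
    have h := hDP n θ θ' hθ hθ' hd B hB
    have hne : ENNReal.ofReal (Real.exp α) * Q n θ' B + ENNReal.ofReal (η n) ≠ ⊤ :=
      ENNReal.add_ne_top.mpr ⟨ENNReal.mul_ne_top ENNReal.ofReal_ne_top (measure_ne_top _ _),
        ENNReal.ofReal_ne_top⟩
    calc (Q n θ B).toReal
        ≤ (ENNReal.ofReal (Real.exp α) * Q n θ' B + ENNReal.ofReal (η n)).toReal :=
          ENNReal.toReal_mono hne h
      _ = Real.exp α * (Q n θ' B).toReal + η n := by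
          rw [ENNReal.toReal_add (ENNReal.mul_ne_top ENNReal.ofReal_ne_top (measure_ne_top _ _))
            ENNReal.ofReal_ne_top, ENNReal.toReal_mul,
            ENNReal.toReal_ofReal (Real.exp_pos α).le, ENNReal.toReal_ofReal (hη0 n)]
  have hdist1 : ∀ a : ℕ, |((a:ℝ)) / n - ((a+1 : ℕ) : ℝ) / n| ≤ 1 / (n : ℝ) := by
    intro a
    push_cast
    rw [show (a:ℝ)/n - ((a:ℝ)+1)/n = -(1/n) by ring, abs_neg,
      abs_of_nonneg (by positivity)]
  -- iterated DP, ascending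
  have chainUp : ∀ j a : ℕ, a + j ≤ n → ∀ B : Set ℝ, MeasurableSet B →
      (Q n ((a:ℝ)/n) B).toReal ≤ Real.exp (j * α) * (Q n (((a+j : ℕ):ℝ)/n) B).toReal
        + j * Real.exp (j * α) * η n := by
    intro j
    induction j with
    | zero => intro a h B hB; simp
    | succ j ih =>
      intro a h B hB
      have h1 := hstep ((a:ℝ)/n) (((a+1 : ℕ):ℝ)/n) ⟨a, by omega, rfl⟩
        ⟨a+1, by omega, rfl⟩ (hdist1 a) B hB
      have h2 := ih (a+1) (by omega) B hB
      have hidx : a + 1 + j = a + (j + 1) := by omega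
      rw [hidx] at h2
      have hexp : Real.exp α * Real.exp (j * α) = Real.exp ((j+1 : ℕ) * α) := by
        rw [← Real.exp_add]; push_cast; ring_nf
      have hE1' : (1:ℝ) ≤ Real.exp ((j+1 : ℕ) * α) := Real.one_le_exp (by positivity)
      have hq : (0:ℝ) ≤ (Q n (((a+(j+1) : ℕ):ℝ)/n) B).toReal := ENNReal.toReal_nonneg
      calc (Q n ((a:ℝ)/n) B).toReal
          ≤ Real.exp α * (Q n (((a+1 : ℕ):ℝ)/n) B).toReal + η n := h1
        _ ≤ Real.exp α * (Real.exp (j * α) * (Q n (((a+(j+1) : ℕ):ℝ)/n) B).toReal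
              + j * Real.exp (j * α) * η n) + η n := by
            have := mul_le_mul_of_nonneg_left h2 (Real.exp_pos α).le
            linarith
        _ = Real.exp ((j+1 : ℕ) * α) * (Q n (((a+(j+1) : ℕ):ℝ)/n) B).toReal
              + ((j:ℝ) * Real.exp ((j+1 : ℕ) * α) * η n + η n) := by
            rw [← hexp]; ring
        _ ≤ Real.exp ((j+1 : ℕ) * α) * (Q n (((a+(j+1) : ℕ):ℝ)/n) B).toReal
              + ((j+1 : ℕ):ℝ) * Real.exp ((j+1 : ℕ) * α) * η n := by
            have h3 : η n ≤ Real.exp ((j+1 : ℕ) * α) * η n := by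
              nlinarith [hη0 n]
            push_cast at h3 ⊢
            linarith
  -- iterated DP, descending
  have chainDown : ∀ j a : ℕ, a + j ≤ n → ∀ B : Set ℝ, MeasurableSet B →
      (Q n (((a+j : ℕ):ℝ)/n) B).toReal ≤ Real.exp (j * α) * (Q n ((a:ℝ)/n) B).toReal
        + j * Real.exp (j * α) * η n := by
    intro j
    induction j with
    | zero => intro a h B hB; simp
    | succ j ih =>
      intro a h B hB
      have hd : |((a+(j+1) : ℕ):ℝ)/n - ((a+j : ℕ):ℝ)/n| ≤ 1 / (n : ℝ) := by
        push_cast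
        rw [show ((a:ℝ)+((j:ℝ)+1))/n - ((a:ℝ)+(j:ℝ))/n = 1/n by ring,
          abs_of_nonneg (by positivity)]
      have h1 := hstep (((a+(j+1) : ℕ):ℝ)/n) (((a+j : ℕ):ℝ)/n)
        ⟨a+(j+1), by omega, rfl⟩ ⟨a+j, by omega, rfl⟩ hd B hB
      have h2 := ih a (by omega) B hB
      have hexp : Real.exp α * Real.exp (j * α) = Real.exp ((j+1 : ℕ) * α) := by
        rw [← Real.exp_add]; push_cast; ring_nf
      calc (Q n (((a+(j+1) : ℕ):ℝ)/n) B).toReal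
          ≤ Real.exp α * (Q n (((a+j : ℕ):ℝ)/n) B).toReal + η n := h1
        _ ≤ Real.exp α * (Real.exp (j * α) * (Q n ((a:ℝ)/n) B).toReal
              + j * Real.exp (j * α) * η n) + η n := by
            have := mul_le_mul_of_nonneg_left h2 (Real.exp_pos α).le
            linarith
        _ = Real.exp ((j+1 : ℕ) * α) * (Q n ((a:ℝ)/n) B).toReal
              + ((j:ℝ) * Real.exp ((j+1 : ℕ) * α) * η n + η n) := by
            rw [← hexp]; ring
        _ ≤ Real.exp ((j+1 : ℕ) * α) * (Q n ((a:ℝ)/n) B).toReal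
              + ((j+1 : ℕ):ℝ) * Real.exp ((j+1 : ℕ) * α) * η n := by
            have hE1' : (1:ℝ) ≤ Real.exp ((j+1 : ℕ) * α) := Real.one_le_exp (by positivity)
            have h3 : η n ≤ Real.exp ((j+1 : ℕ) * α) * η n := by
              nlinarith [hη0 n]
            push_cast at h3 ⊢
            linarith
  obtain ⟨a, han, rfl⟩ := hθ0
  -- find the far grid point θ1
  have key : ∃ θ1 : ℝ, Grid n θ1 ∧ |θ1 - (a:ℝ)/n| = (m:ℝ) / n ∧
      ∀ B : Set ℝ, MeasurableSet B →
        (Q n θ1 B).toReal ≤ E * (Q n ((a:ℝ)/n) B).toReal + m * E * η n := by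
    by_cases hcase : a + m ≤ n
    · refine ⟨((a+m : ℕ):ℝ)/n, ⟨a+m, by omega, rfl⟩, ?_, ?_⟩
      · push_cast
        rw [show ((a:ℝ)+(m:ℝ))/n - (a:ℝ)/n = (m:ℝ)/n by ring,
          abs_of_nonneg (by positivity)]
      · intro B hB
        simpa [hE] using chainDown m a hcase B hB
    · have ham : m ≤ a := by omega
      refine ⟨((a-m : ℕ):ℝ)/n, ⟨a-m, by omega, rfl⟩, ?_, ?_⟩
      · have : ((a-m : ℕ):ℝ) = (a:ℝ) - (m:ℝ) := by
          push_cast [Nat.cast_sub ham]; ring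
        rw [this, show ((a:ℝ)-(m:ℝ))/n - (a:ℝ)/n = -((m:ℝ)/n) by ring, abs_neg,
          abs_of_nonneg (by positivity)]
      · intro B hB
        have h := chainUp m (a-m) (by omega) B hB
        have hidx : a - m + m = a := by omega
        rw [hidx] at h
        simpa [hE] using h
  obtain ⟨θ1, hθ1g, hdist, hchain⟩ := key
  set r : ℝ := (m:ℝ) / (2*n) with hr
  have hr0 : 0 < r := by positivity
  set B : Set ℝ := {t : ℝ | |t - θ1| < r} with hBdef
  have hmeas1 : Measurable fun t : ℝ => |t - θ1| :=
    (continuous_abs.comp (continuous_id.sub continuous_const)).measurable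
  have hB : MeasurableSet B := hmeas1 measurableSet_Iio
  -- Markov bound at θ1
  have hmeasf1 : Measurable fun t : ℝ => ENNReal.ofReal |t - θ1| :=
    hmeas1.ennreal_ofReal
  have markov := mul_meas_ge_le_lintegral₀ (μ := Q n θ1) hmeasf1.aemeasurable
    (ENNReal.ofReal r)
  have hsetEq : {x : ℝ | ENNReal.ofReal r ≤ ENNReal.ofReal |x - θ1|} = Bᶜ := by
    ext x
    simp [hBdef, ENNReal.ofReal_le_ofReal_iff (abs_nonneg _), not_lt, le_abs]
  rw [hsetEq] at markov
  have hub1 := hub n hn0 θ1 hθ1g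
  have hmark : ENNReal.ofReal r * Q n θ1 Bᶜ ≤ ENNReal.ofReal (c0 / (α * n)) :=
    le_trans markov hub1
  have hmarkR : r * (Q n θ1 Bᶜ).toReal ≤ c0 / (α * n) := by
    have := ENNReal.toReal_mono ENNReal.ofReal_ne_top hmark
    rwa [ENNReal.toReal_mul, ENNReal.toReal_ofReal hr0.le,
      ENNReal.toReal_ofReal (by positivity)] at this
  -- hence Q θ1 Bᶜ ≤ 1/2
  have hhalf : (Q n θ1 Bᶜ).toReal ≤ 1/2 := by
    have hkey : c0 / (α * n) ≤ r * (1/2) := by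
      rw [div_le_iff₀ (by positivity)] at hm4
      have h1 : c0 / (α * n) ≤ ((m:ℝ) * α / 4) / (α * n) := by
        gcongr
        linarith
      have h2 : ((m:ℝ) * α / 4) / (α * n) = r * (1/2) := by
        rw [hr]; field_simp; ring
      linarith [h1, h2.le, h2.ge]
    have := le_trans hmarkR hkey
    exact le_of_mul_le_mul_left (by linarith) hr0
  have hsum : (Q n θ1 B).toReal + (Q n θ1 Bᶜ).toReal = 1 := by
    have := measure_add_measure_compl (μ := Q n θ1) hB
    rw [measure_univ] at this
    have h2 := congrArg ENNReal.toReal this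
    rwa [ENNReal.toReal_add (measure_ne_top _ _) (measure_ne_top _ _),
      ENNReal.toReal_one] at h2
  have hq1B : (1:ℝ)/2 ≤ (Q n θ1 B).toReal := by linarith
  -- transfer to θ0 via the chain
  have hηn : η n < 1 / (4 * m * E) := hN1 n hnN1
  have hq0B : 1 / (4 * E) ≤ (Q n ((a:ℝ)/n) B).toReal := by
    have h := hchain B hB
    have hmE : m * E * η n ≤ 1/4 := by
      have : (m:ℝ) * E * η n ≤ m * E * (1 / (4 * m * E)) :=
        mul_le_mul_of_nonneg_left hηn.le (by positivity)
      calc (m:ℝ) * E * η n ≤ m * E * (1 / (4 * m * E)) := this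
        _ = 1/4 := by field_simp
    have hEq : E * (Q n ((a:ℝ)/n) B).toReal ≥ 1/4 := by linarith
    rw [div_le_iff₀ (by positivity)]
    have hrw : (Q n ((a:ℝ)/n) B).toReal * (4 * E) = 4 * (E * (Q n ((a:ℝ)/n) B).toReal) := by
      ring
    rw [hrw]
    linarith
  -- lower bound on the risk at θ0
  have hlow : ∀ t ∈ B, ENNReal.ofReal r ≤ ENNReal.ofReal |t - (a:ℝ)/n| := by
    intro t ht
    apply ENNReal.ofReal_le_ofReal
    have ht' : |t - θ1| < r := ht
    have htri : |θ1 - (a:ℝ)/n| ≤ |θ1 - t| + |t - (a:ℝ)/n| := abs_sub_le _ _ _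
    have h2r : (m:ℝ)/n = 2 * r := by rw [hr]; field_simp
    rw [hdist, h2r] at htri
    rw [abs_sub_comm] at ht'
    linarith
  have hmeasf0 : Measurable fun t : ℝ => ENNReal.ofReal |t - (a:ℝ)/n| :=
    ((continuous_abs.comp (continuous_id.sub continuous_const)).measurable).ennreal_ofReal
  have hfinal : ENNReal.ofReal (α * m / (8 * E) / (α * n))
      ≤ ∫⁻ t, ENNReal.ofReal |t - (a:ℝ)/n| ∂(Q n ((a:ℝ)/n)) := by
    calc ENNReal.ofReal (α * m / (8 * E) / (α * n))
        = ENNReal.ofReal (r * (1 / (4 * E))) := by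
          congr 1
          rw [hr]; field_simp; ring
      _ = ENNReal.ofReal r * ENNReal.ofReal (1 / (4 * E)) :=
          ENNReal.ofReal_mul hr0.le
      _ ≤ ENNReal.ofReal r * Q n ((a:ℝ)/n) B := by
          gcongr
          exact ENNReal.ofReal_le_of_le_toReal hq0B
      _ = ∫⁻ _ in B, ENNReal.ofReal r ∂(Q n ((a:ℝ)/n)) := by
          rw [setLIntegral_const]
      _ ≤ ∫⁻ t in B, ENNReal.ofReal |t - (a:ℝ)/n| ∂(Q n ((a:ℝ)/n)) :=
          setLIntegral_mono hmeasf0 hlow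
      _ ≤ ∫⁻ t, ENNReal.ofReal |t - (a:ℝ)/n| ∂(Q n ((a:ℝ)/n)) :=
          setLIntegral_le_lintegral _ _
  exact hfinal
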